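/- arXiv:2412.03415 — 2 statements merged into one kernel-verified Lean document; each statement's English description precedes it below -/
import Mathlib

section
/- Let (η_i)_{i≥1} be i.i.d. random variables taking values in the nonnegative integers. Set W_m = η_1 + ⋯ + η_m and let χ = inf{ m ≥ 1 : W_m − m = −1 } (the first time the random walk Q_0 = 1, Q_i = Q_{i−1} + η_i − 1 hits 0). Then for every m ≥ 1, P(χ = m) = (1/m) · P(W_m = m − 1). -/
namespace KempermanAux

/-- Integer walk `g y j = (∑_{i<j} y i) - j`. -/
def g (y : ℕ → ℕ) (j : ℕ) : ℤ := (∑ i ∈ Finset.range j, (y i : ℤ)) - j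

lemma g_zero (y : ℕ → ℕ) : g y 0 = 0 := by simp [g]

lemma g_succ (y : ℕ → ℕ) (j : ℕ) : g y (j + 1) = g y j + y j - 1 := by
  simp [g, Finset.sum_range_succ]; ring

lemma sum_shift (y : ℕ → ℕ) (r : ℕ) : ∀ j : ℕ,
    ∑ i ∈ Finset.range j, (y (i + r) : ℤ)
      = (∑ i ∈ Finset.range (r + j), (y i : ℤ)) - ∑ i ∈ Finset.range r, (y i : ℤ) := by
  intro j
  induction j with
  | zero => simp
  | succ j ih =>
      rw [Finset.sum_range_succ, ih, show r + (j + 1) = (r + j) + 1 by ring,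
        Finset.sum_range_succ, show j + r = r + j by ring]
      ring

lemma g_shift (y : ℕ → ℕ) (r j : ℕ) :
    g (fun i => y (i + r)) j = g y (r + j) - g y r := by
  simp only [g, sum_shift]
  push_cast
  ring

section Periodic

variable {m : ℕ} {y : ℕ → ℕ}

lemma sum_window (hper : ∀ i, y (i + m) = y i) : ∀ k : ℕ,
    ∑ i ∈ Finset.range m, (y (i + k) : ℤ) = ∑ i ∈ Finset.range m, (y i : ℤ) := by
  intro k
  induction k with
  | zero => simp
  | succ k ih =>
      have h1 := Finset.sum_range_succ (fun i => (y (i + k) : ℤ)) m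
      have h2 := Finset.sum_range_succ' (fun i => (y (i + k) : ℤ)) m
      have h3 : (y (m + k) : ℤ) = (y k : ℤ) := by
        rw [show m + k = k + m by ring, hper]
      rw [← ih]
      have : ∑ i ∈ Finset.range m, (y (i + 1 + k) : ℤ)
          = ∑ i ∈ Finset.range m, (y (i + k) : ℤ) := by
        have := h1.symm.trans h2
        simp only [Nat.zero_add] at this
        rw [h3] at this
        linarith
      rw [← this]
      apply Finset.sum_congr rfl
      intro i _
      norm_num
      ring_nf

lemma g_window (hper : ∀ i, y (i + m) = y i) (k : ℕ) :
    g (fun i => y (i + k)) m = g y m := by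
  simp only [g, sum_window hper]

lemma g_add_period (hper : ∀ i, y (i + m) = y i) (hsum : g y m = -1) (k : ℕ) :
    g y (k + m) = g y k - 1 := by
  have h := sum_shift y k m
  have h2 := sum_window hper k
  simp only [g] at hsum ⊢
  push_cast at hsum ⊢
  linarith

/-- key: there is a unique first minimizer, which is the unique good rotation. -/
lemma exists_unique_good (hm : 1 ≤ m) (hper : ∀ i, y (i + m) = y i) (hsum : g y m = -1) :
    ∃! r : ℕ, r < m ∧ ∀ j, j < m → g y r ≤ g y (r + j) := by
  classical
  -- first minimizer on [0, m)
  obtain ⟨r, hrm, hrmin, hrfirst⟩ :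
      ∃ r, r < m ∧ (∀ k, k < m → g y r ≤ g y k) ∧ ∀ k, k < r → g y r < g y k := by
    obtain ⟨v, hv, hvmin⟩ := Finset.exists_min_image (Finset.range m) (g y)
      ⟨0, Finset.mem_range.mpr hm⟩
    have hex : ∃ r, r < m ∧ g y r = g y v := ⟨v, Finset.mem_range.mp hv, rfl⟩
    set r := Nat.find hex with hr
    obtain ⟨hrm, hrv⟩ := Nat.find_spec hex
    refine ⟨r, hrm, ?_, ?_⟩
    · intro k hk
      rw [hrv]
      exact hvmin k (Finset.mem_range.mpr hk)
    · intro k hk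
      have hk' : ¬(k < m ∧ g y k = g y v) := Nat.find_min hex hk
      have hkm : k < m := hk.trans hrm
      have := hvmin k (Finset.mem_range.mpr hkm)
      rw [hrv]
      rcases lt_or_eq_of_le this with h | h
      · exact h
      · exact absurd ⟨hkm, h.symm⟩ hk'
  refine ⟨r, ⟨hrm, ?_⟩, ?_⟩
  · -- r is good
    intro j hj
    rcases lt_or_ge (r + j) m with h | h
    · exact hrmin _ h
    · have hk : r + j - m < r := by omega
      have hkeq : r + j = (r + j - m) + m := by omega
      rw [hkeq, g_add_period hper hsum]
      have := hrfirst _ hk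
      omega
  · -- uniqueness
    intro r' ⟨hr'm, hgood⟩
    -- r' is also a first minimizer
    have hr'min : ∀ k, k < m → g y r' ≤ g y k := by
      intro k hk
      rcases le_or_gt r' k with h | h
      · have := hgood (k - r') (by omega)
        rwa [show r' + (k - r') = k by omega] at this
      · have := hgood (k + m - r') (by omega)
        rw [show r' + (k + m - r') = k + m by omega, g_add_period hper hsum] at this
        omega
    have hr'first : ∀ k, k < r' → g y r' < g y k := by
      intro k hk
      have := hgood (k + m - r') (by omega)
      rw [show r' + (k + m - r') = k + m by omega, g_add_period hper hsum] at this
      omega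
    rcases lt_trichotomy r' r with h | h | h
    · have h1 := hrfirst r' h
      have h2 := hr'min r hrm
      omega
    · exact h
    · have h1 := hr'first r h
      have h2 := hrmin r' hr'm
      omega

lemma exists_unique_rot (hm : 1 ≤ m) (hper : ∀ i, y (i + m) = y i) (hsum : g y m = -1) :
    ∃! r : ℕ, r < m ∧ ∀ j, j < m → 0 ≤ g (fun i => y (i + r)) j := by
  have := exists_unique_good hm hper hsum
  convert this using 3 with r
  constructor
  · intro h j hj; have := h j hj; rw [g_shift] at this; omega
  · intro h j hj; rw [g_shift]; have := h j hj; omega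

/-- "never equals -1 before m" ↔ "nonneg before m", since steps down are by at most 1. -/
lemma ne_iff_nonneg (m : ℕ) (y : ℕ → ℕ) :
    (∀ j, 1 ≤ j → j < m → g y j ≠ -1) ↔ (∀ j, j < m → 0 ≤ g y j) := by
  constructor
  · intro h j
    induction j with
    | zero => intro _; rw [g_zero]
    | succ j ih =>
        intro hj
        have h1 := ih (by omega)
        have h2 := g_succ y j
        have h3 := h (j + 1) (by omega) hj
        have : (0 : ℤ) ≤ y j := Int.natCast_nonneg _
        omega
  · intro h j h1 hj
    have := h j hj
    omega


end Periodic

section Canonical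

variable (m : ℕ) [NeZero m]

/-- periodic extension of a `Fin m`-tuple. -/
def pad (x : Fin m → ℕ) (i : ℕ) : ℕ :=
  x ⟨i % m, Nat.mod_lt _ (Nat.pos_of_ne_zero (NeZero.ne m))⟩

/-- cyclic rotation of a tuple. -/
def rot (r : Fin m) (x : Fin m → ℕ) : Fin m → ℕ := fun i => x (i + r)

/-- The event `{χ = m}` on the canonical space. -/
def Aset : Set (Fin m → ℕ) :=
  {x | g (pad m x) m = -1 ∧ ∀ j, j < m → 0 ≤ g (pad m x) j}

/-- The event `{W m = m - 1}` on the canonical space. -/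
def Bset : Set (Fin m → ℕ) := {x | g (pad m x) m = -1}

lemma pad_period (x : Fin m → ℕ) : ∀ i, pad m x (i + m) = pad m x i := by
  intro i
  unfold pad
  exact congrArg x (Fin.ext (Nat.add_mod_right i m))

lemma pad_rot (r : Fin m) (x : Fin m → ℕ) :
    pad m (rot m r x) = fun j => pad m x (j + r.val) := by
  funext j
  unfold pad rot
  refine congrArg x (Fin.ext ?_)
  rw [Fin.val_add]
  show ((j % m) + r.val) % m = (j + r.val) % m
  exact Nat.mod_add_mod j m r.val

lemma rotpre_subset_B (r : Fin m) : rot m r ⁻¹' Aset m ⊆ Bset m := by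
  intro x hx
  have h1 : g (pad m (rot m r x)) m = -1 := hx.1
  rw [pad_rot, g_window (pad_period m x)] at h1
  exact h1

lemma rot_mem_A_iff {x : Fin m → ℕ} (hx : x ∈ Bset m) (r : Fin m) :
    x ∈ rot m r ⁻¹' Aset m ↔ ∀ j, j < m → 0 ≤ g (fun i => pad m x (i + r.val)) j := by
  have hw : g (fun i => pad m x (i + r.val)) m = -1 := by
    rw [g_window (pad_period m x) r.val]; exact hx
  simp only [Set.mem_preimage, Aset, Set.mem_setOf_eq, pad_rot]
  exact and_iff_right hw

lemma B_eq_iUnion : Bset m = ⋃ r : Fin m, rot m r ⁻¹' Aset m := by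
  ext x
  simp only [Set.mem_iUnion]
  constructor
  · intro hx
    obtain ⟨r, ⟨hrm, hgood⟩, -⟩ :=
      exists_unique_rot (Nat.pos_of_ne_zero (NeZero.ne m)) (pad_period m x) hx
    exact ⟨⟨r, hrm⟩, (rot_mem_A_iff m hx ⟨r, hrm⟩).mpr hgood⟩
  · rintro ⟨r, hr⟩
    exact rotpre_subset_B m r hr

lemma C_disjoint :
    Pairwise (Function.onFun Disjoint (fun r : Fin m => rot m r ⁻¹' Aset m)) := by
  intro r r' hne
  rw [Function.onFun, Set.disjoint_left]
  intro x hxr hxr'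
  have hxB := rotpre_subset_B m r hxr
  obtain ⟨u, -, huniq⟩ :=
    exists_unique_rot (Nat.pos_of_ne_zero (NeZero.ne m)) (pad_period m x) hxB
  have h1 := huniq r.val ⟨r.isLt, (rot_mem_A_iff m hxB r).mp hxr⟩
  have h2 := huniq r'.val ⟨r'.isLt, (rot_mem_A_iff m hxB r').mp hxr'⟩
  exact hne (Fin.ext (h1.trans h2.symm))

end Canonical
end KempermanAux

open MeasureTheory ProbabilityTheory KempermanAux
open scoped ENNReal

/-- **Kemperman's formula for i.i.d. increments, k = 1.** For i.i.d. `ℕ`-valued `η i`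
with partial sums `W m`, and `χ = inf { m ≥ 1 : W m - m = -1 }` (the hitting time of `0`
by the walk `Q i = 1 + W i - i`), one has `P(χ = m) = (1/m) · P(W m = m - 1)`. -/
theorem kemperman_iid
    {Ω : Type*} [MeasureSpace Ω] [IsProbabilityMeasure (ℙ : Measure Ω)]
    (η : ℕ → Ω → ℕ) (hmeas : ∀ i, Measurable (η i))
    (hindep : iIndepFun η ℙ)
    (hident : ∀ i, Measure.map (η i) ℙ = Measure.map (η 0) ℙ)
    (W : ℕ → Ω → ℕ) (hW : ∀ j ω, W j ω = ∑ i ∈ Finset.range j, η i ω)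
    (χ : Ω → ℕ)
    (hχ : ∀ ω, χ ω = sInf {j : ℕ | 1 ≤ j ∧ (W j ω : ℤ) - (j : ℤ) = -1})
    (m : ℕ) (hm : 1 ≤ m) :
    ℙ {ω | χ ω = m} = (1 : ℝ≥0∞) / m * ℙ {ω | (W m ω : ℤ) = (m : ℤ) - 1} := by
  classical
  haveI : NeZero m := ⟨by omega⟩
  have hm0 : 0 < m := hm
  set μ : Measure ℕ := Measure.map (η 0) ℙ with hμdef
  haveI hμ : IsProbabilityMeasure μ := Measure.isProbabilityMeasure_map (hmeas 0).aemeasurable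
  set T : Ω → (Fin m → ℕ) := fun ω i => η i ω with hTdef
  have hT : Measurable T := measurable_pi_lambda _ fun i => hmeas i
  set π : Measure (Fin m → ℕ) := Measure.pi (fun _ => μ) with hπdef
  have hmeasAll : ∀ s : Set (Fin m → ℕ), MeasurableSet s :=
    fun s => s.to_countable.measurableSet
  have hmeasN : ∀ s : Set ℕ, MeasurableSet s := fun s => s.to_countable.measurableSet
  -- the joint law of `(η 0, …, η (m-1))` is the product measure
  have hmap : π = Measure.map T ℙ := by
    refine Measure.pi_eq fun s hs => ?_
    rw [Measure.map_apply hT (MeasurableSet.univ_pi hs)]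
    set s' : ℕ → Set ℕ := fun n => if h : n < m then s ⟨n, h⟩ else Set.univ with hs'def
    have hpre : T ⁻¹' Set.pi Set.univ s = ⋂ i ∈ Finset.range m, η i ⁻¹' s' i := by
      ext ω
      simp only [Set.mem_preimage, Set.mem_pi, Set.mem_univ, forall_true_left,
        Set.mem_iInter, Finset.mem_range]
      constructor
      · intro h i hi
        simp only [hs'def, Set.mem_preimage, dif_pos hi]
        exact h ⟨i, hi⟩
      · intro h i
        have := h i.val i.isLt
        simpa only [hs'def, Set.mem_preimage, dif_pos i.isLt, Fin.eta] using this
    rw [hpre, hindep.measure_inter_preimage_eq_mul (Finset.range m) (fun i _ => hmeasN _)]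
    have hident' : ∀ i ∈ Finset.range m, ℙ (η i ⁻¹' s' i) = μ (s' i) := by
      intro i _
      rw [← hident i, Measure.map_apply (hmeas i) (hmeasN _)]
    rw [Finset.prod_congr rfl hident',
      ← Fin.prod_univ_eq_prod_range (fun n => μ (s' n)) m]
    refine Finset.prod_congr rfl fun i _ => ?_
    congr 1
    simp only [hs'def, dif_pos i.isLt, Fin.eta]
  -- the walk in terms of the canonical tuple
  have hgW : ∀ (ω : Ω) (j : ℕ), j ≤ m → g (pad m (T ω)) j = (W j ω : ℤ) - j := by
    intro ω j hj
    unfold g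
    rw [hW j ω]
    push_cast
    congr 1
    refine Finset.sum_congr rfl fun i hi => ?_
    have him : i < m := lt_of_lt_of_le (Finset.mem_range.mp hi) hj
    norm_cast
    show (T ω) ⟨i % m, _⟩ = η i ω
    rw [hTdef]
    simp [Nat.mod_eq_of_lt him]
  -- event identifications
  have hAevent : {ω | χ ω = m} = T ⁻¹' Aset m := by
    ext ω
    simp only [Set.mem_setOf_eq, Set.mem_preimage, Aset]
    rw [hχ ω, ← ne_iff_nonneg m (pad m (T ω))]
    constructor
    · intro h
      have hne : {j : ℕ | 1 ≤ j ∧ (W j ω : ℤ) - j = -1}.Nonempty := by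
        by_contra hcon
        rw [Set.not_nonempty_iff_eq_empty] at hcon
        rw [hcon, Nat.sInf_empty] at h
        omega
      have hmem := Nat.sInf_mem hne
      rw [h] at hmem
      refine ⟨by rw [hgW ω m le_rfl]; exact hmem.2, ?_⟩
      intro j h1 hj hgj
      have hnotin : j ∉ {j : ℕ | 1 ≤ j ∧ (W j ω : ℤ) - j = -1} :=
        Nat.notMem_of_lt_sInf (h ▸ hj)
      exact hnotin ⟨h1, by rw [← hgW ω j hj.le]; exact hgj⟩
    · rintro ⟨hsum, hfirst⟩
      have hmem : m ∈ {j : ℕ | 1 ≤ j ∧ (W j ω : ℤ) - j = -1} :=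
        ⟨hm, by rw [← hgW ω m le_rfl]; exact hsum⟩
      refine le_antisymm (Nat.sInf_le hmem) ?_
      by_contra hlt
      push_neg at hlt
      have h2 := Nat.sInf_mem (⟨m, hmem⟩ : Set.Nonempty _)
      have h3 : g (pad m (T ω)) (sInf {j : ℕ | 1 ≤ j ∧ (W j ω : ℤ) - j = -1}) ≠ -1 :=
        hfirst _ h2.1 hlt
      exact h3 (by rw [hgW ω _ hlt.le]; exact h2.2)
  have hBevent : {ω | (W m ω : ℤ) = (m : ℤ) - 1} = T ⁻¹' Bset m := by
    ext ω
    simp only [Set.mem_setOf_eq, Set.mem_preimage, Bset, Set.mem_setOf_eq]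
    rw [hgW ω m le_rfl]
    omega
  -- rotation invariance of the product measure
  have hrotmeas : ∀ r : Fin m, Measurable (rot m r) :=
    fun r => measurable_pi_lambda _ fun i => measurable_pi_apply _
  have hrot : ∀ r : Fin m, Measure.map (rot m r) π = π := by
    intro r
    refine (Measure.pi_eq fun s hs => ?_).symm
    rw [Measure.map_apply (hrotmeas r) (hmeasAll _)]
    have hpre : rot m r ⁻¹' Set.pi Set.univ s = Set.pi Set.univ (fun j => s (j - r)) := by
      ext x
      simp only [Set.mem_preimage, Set.mem_pi, Set.mem_univ, forall_true_left, rot]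
      constructor
      · intro h j
        have := h (j - r)
        rwa [sub_add_cancel] at this
      · intro h i
        have := h (i + r)
        rwa [add_sub_cancel_right] at this
    rw [hpre, Measure.pi_pi]
    exact Fintype.prod_equiv (Equiv.subRight r) _ _ (fun j => rfl)
  -- measure computation
  have hπC : ∀ r : Fin m, π (rot m r ⁻¹' Aset m) = π (Aset m) := by
    intro r
    rw [← Measure.map_apply (hrotmeas r) (hmeasAll (Aset m)), hrot r]
  have hπB : π (Bset m) = m * π (Aset m) := by
    rw [B_eq_iUnion m, measure_iUnion (C_disjoint m) (fun r => hmeasAll _), tsum_fintype]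
    simp only [hπC]
    rw [Finset.sum_const, Finset.card_univ, Fintype.card_fin, nsmul_eq_mul]
  have h1 : ℙ {ω | χ ω = m} = π (Aset m) := by
    rw [hAevent, ← Measure.map_apply hT (hmeasAll (Aset m)), ← hmap]
  have h2 : ℙ {ω | (W m ω : ℤ) = (m : ℤ) - 1} = π (Bset m) := by
    rw [hBevent, ← Measure.map_apply hT (hmeasAll (Bset m)), ← hmap]
  rw [h1, h2, hπB, ← mul_assoc, one_div,
    ENNReal.inv_mul_cancel (by exact_mod_cast hm0.ne')
      (ENNReal.natCast_ne_top m), one_mul]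
end

section
/- Fix p ∈ (0,1) and b > 0. Define G_{b,+} : [0,∞) → [0,1] by G_{b,+}(0) = 0 and G_{b,+}(x) = min( exp(−x^{−b}) / (1−p), 1 ) for x > 0, and let G_{b,+}^{-1}(y) = inf{ x ≥ 0 : G_{b,+}(x) ≥ y } denote its generalized inverse. Then G_{b,+}^{-1}(e^{−u}) = ( u − log(1−p) )^{−1/b} for all u ≥ 0, and for every ε > 0 the integral ∫_{1/ε}^{∞} G_{b,+}^{-1}(e^{−u}) · u^{−1} du is finite. -/
open MeasureTheory
open scoped ENNReal

/-- **Min-summability of `G_{b,+}`.** For `p ∈ (0,1)` and `b > 0`, the distribution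
function `G_{b,+}(0) = 0`, `G_{b,+}(x) = min(exp(-x^{-b})/(1-p), 1)` for `x > 0` has
generalized inverse satisfying `G_{b,+}^{-1}(e^{-u}) = (u - log(1-p))^{-1/b}`, and
`∫_{1/ε}^∞ G_{b,+}^{-1}(e^{-u}) du/u` is finite for every `ε > 0`. -/
theorem Gb_min_summable
    (p b : ℝ) (hp0 : 0 < p) (hp1 : p < 1) (hb : 0 < b)
    (G Ginv : ℝ → ℝ)
    (hG0 : G 0 = 0)
    (hG : ∀ x : ℝ, 0 < x → G x = min (Real.exp (-(x ^ (-b))) / (1 - p)) 1)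
    (hGinv : ∀ y : ℝ, Ginv y = sInf {x : ℝ | 0 ≤ x ∧ y ≤ G x}) :
    (∀ u : ℝ, 0 ≤ u →
        Ginv (Real.exp (-u)) = (u - Real.log (1 - p)) ^ (-(1 / b))) ∧
    ∀ ε : ℝ, 0 < ε →
      (∫⁻ u in Set.Ici (1 / ε), ENNReal.ofReal (Ginv (Real.exp (-u)) / u)) < ⊤ := by
  have hp' : (0:ℝ) < 1 - p := by linarith
  have hLneg : Real.log (1 - p) < 0 := Real.log_neg (by linarith) (by linarith)
  have hexpL : Real.exp (Real.log (1 - p)) = 1 - p := Real.exp_log hp'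
  have hb' : b ≠ 0 := ne_of_gt hb
  have key : ∀ u : ℝ, 0 ≤ u →
      Ginv (Real.exp (-u)) = (u - Real.log (1 - p)) ^ (-(1 / b)) := by
    intro u hu
    set L := Real.log (1 - p) with hLdef
    have hc : 0 < u - L := by linarith
    set x₀ := (u - L) ^ (-(1/b)) with hx0def
    have hx0pos : 0 < x₀ := Real.rpow_pos_of_pos hc _
    have hmul : (-b) * (-(1/b)) = 1 := by field_simp
    have hmul' : (-(1/b)) * (-b) = 1 := by field_simp
    have hset : {x : ℝ | 0 ≤ x ∧ Real.exp (-u) ≤ G x} = Set.Ici x₀ := by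
      ext x
      simp only [Set.mem_setOf_eq, Set.mem_Ici]
      constructor
      · rintro ⟨hx0', hGx⟩
        have hxpos : 0 < x := by
          rcases lt_or_eq_of_le hx0' with h | h
          · exact h
          · exfalso; rw [← h, hG0] at hGx
            exact absurd hGx (not_le.2 (Real.exp_pos _))
        rw [hG x hxpos] at hGx
        have h1 : Real.exp (-u) ≤ Real.exp (-(x ^ (-b))) / (1 - p) :=
          le_trans hGx (min_le_left _ _)
        have h2 : Real.exp (-u) * (1 - p) ≤ Real.exp (-(x ^ (-b))) :=
          (le_div_iff₀ hp').mp h1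
        have h3 : Real.exp (-u + L) ≤ Real.exp (-(x ^ (-b))) := by
          rw [Real.exp_add, hLdef, hexpL]; exact h2
        have h4 : x ^ (-b) ≤ u - L := by
          have := Real.exp_le_exp.mp h3
          linarith
        have h5 : (u - L) ^ (-(1/b)) ≤ (x ^ (-b)) ^ (-(1/b)) :=
          Real.rpow_le_rpow_of_nonpos (Real.rpow_pos_of_pos hxpos _) h4
            (by positivity |> neg_nonpos_of_nonneg)
        rwa [← Real.rpow_mul hxpos.le, hmul, Real.rpow_one] at h5
      · intro hx
        have hxpos : 0 < x := lt_of_lt_of_le hx0pos hx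
        refine ⟨hxpos.le, ?_⟩
        rw [hG x hxpos]
        refine le_min ?_ (Real.exp_le_one_iff.mpr (by linarith))
        have h4 : x ^ (-b) ≤ u - L := by
          have h5 : x ^ (-b) ≤ x₀ ^ (-b) :=
            Real.rpow_le_rpow_of_nonpos hx0pos hx (by linarith)
          rwa [hx0def, ← Real.rpow_mul hc.le, hmul', Real.rpow_one] at h5
        rw [le_div_iff₀ hp']
        calc Real.exp (-u) * (1 - p) = Real.exp (-u + L) := by
              rw [Real.exp_add, hLdef, hexpL]
          _ ≤ Real.exp (-(x ^ (-b))) := Real.exp_le_exp.mpr (by linarith)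
    rw [hGinv, hset, csInf_Ici]
  refine ⟨key, ?_⟩
  intro ε hε
  have ha : 0 < 1 / ε := by positivity
  have hbpos : 0 < 1 / b := by positivity
  have hmeas : Measurable fun u : ℝ => ENNReal.ofReal (u ^ (-(1/b) - 1)) :=
    by fun_prop
  have hmono : ∀ u ∈ Set.Ici (1/ε),
      ENNReal.ofReal (Ginv (Real.exp (-u)) / u) ≤ ENNReal.ofReal (u ^ (-(1/b) - 1)) := by
    intro u hu
    have hu0 : 0 < u := lt_of_lt_of_le ha hu
    rw [key u hu0.le]
    apply ENNReal.ofReal_le_ofReal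
    have h1 : (u - Real.log (1 - p)) ^ (-(1/b)) ≤ u ^ (-(1/b)) :=
      Real.rpow_le_rpow_of_nonpos hu0 (by linarith) (by linarith)
    calc (u - Real.log (1 - p)) ^ (-(1/b)) / u ≤ u ^ (-(1/b)) / u := by
          gcongr
      _ = u ^ (-(1/b) - 1) := by
          rw [Real.rpow_sub hu0, Real.rpow_one]
  have hint : IntegrableOn (fun u : ℝ => u ^ (-(1/b) - 1)) (Set.Ici (1/ε)) := by
    rw [integrableOn_Ici_iff_integrableOn_Ioi]
    exact integrableOn_Ioi_rpow_of_lt (by linarith) ha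
  calc (∫⁻ u in Set.Ici (1/ε), ENNReal.ofReal (Ginv (Real.exp (-u)) / u))
      ≤ ∫⁻ u in Set.Ici (1/ε), ENNReal.ofReal (u ^ (-(1/b) - 1)) :=
        setLIntegral_mono hmeas hmono
    _ < ⊤ := hint.lintegral_lt_top
end
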